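/- For every continuously differentiable function u on [0,1] with u(0) = u(1) = 0 and u not identically zero, the Rayleigh quotient satisfies ∫₀¹ u'(x)² dx ≥ π² ∫₀¹ u(x)² dx (Poincaré/Wirtinger inequality), so the minimum of the Rayleigh quotient over such functions is π². -/

import Mathlib

open Real

section WirtingerAux
open Set MeasureTheory intervalIntegral Filter Topology

private lemma ptwise' (g u c s : ℝ) (hs : s ≠ 0) (hcs : c^2 + s^2 = 1) :
    g^2 - π^2*u^2 - (2*π*u*g*(c/s) - π^2*u^2/s^2) = (g - π*u*(c/s))^2 := by
  field_simp
  linear_combination (-(π^2*u^2)) * hcs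

private lemma hlin' (x : ℝ) : HasDerivAt (fun y : ℝ => π * y) π x := by
  simpa using (hasDerivAt_id x).const_mul π

private lemma hsinD (x : ℝ) : HasDerivAt (fun y => Real.sin (π*y)) (π * Real.cos (π*x)) x := by
  have h := (Real.hasDerivAt_sin (π*x)).comp x (hlin' x)
  simp only [Function.comp_def] at h
  refine h.congr_deriv ?_
  ring

private lemma hcosD (x : ℝ) : HasDerivAt (fun y => Real.cos (π*y)) (-(π * Real.sin (π*x))) x := by
  have h := (Real.hasDerivAt_cos (π*x)).comp x (hlin' x)
  simp only [Function.comp_def] at h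
  refine h.congr_deriv ?_
  ring

private lemma int_sin_sq' : ∫ x in (0:ℝ)..1, (Real.sin (π*x))^2 = 1/2 := by
  have hA : ∀ x ∈ uIcc (0:ℝ) 1, HasDerivAt
      (fun y => y/2 - Real.sin (π*y) * Real.cos (π*y) / (2*π)) ((Real.sin (π*x))^2) x := by
    intro x _
    have h1 : HasDerivAt (fun y : ℝ => y/2) (1/2) x := (hasDerivAt_id x).div_const 2
    have h2 := (((hsinD x).mul (hcosD x)).div_const (2*π))
    have h := h1.sub h2
    refine h.congr_deriv ?_
    have hcs : Real.cos (π*x)^2 + Real.sin (π*x)^2 = 1 := Real.cos_sq_add_sin_sq _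
    field_simp
    linear_combination (-1) * hcs
  have hint : IntervalIntegrable (fun x => (Real.sin (π*x))^2) volume 0 1 :=
    ((Real.continuous_sin.comp (continuous_const.mul continuous_id)).pow 2).intervalIntegrable 0 1
  rw [intervalIntegral.integral_eq_sub_of_hasDerivAt hA hint]
  simp [Real.sin_pi]

private lemma int_cos_sq' : ∫ x in (0:ℝ)..1, (π * Real.cos (π*x))^2 = π^2/2 := by
  have hA : ∀ x ∈ uIcc (0:ℝ) 1, HasDerivAt
      (fun y => π^2 * (y/2) + π * (Real.sin (π*y) * Real.cos (π*y)) / 2)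
      ((π * Real.cos (π*x))^2) x := by
    intro x _
    have h1 : HasDerivAt (fun y : ℝ => π^2 * (y/2)) (π^2 * (1/2)) x :=
      ((hasDerivAt_id x).div_const 2).const_mul (π^2)
    have h2 := (((hsinD x).mul (hcosD x)).const_mul π).div_const 2
    have h := h1.add h2
    refine h.congr_deriv ?_
    have hcs : Real.cos (π*x)^2 + Real.sin (π*x)^2 = 1 := Real.cos_sq_add_sin_sq _
    field_simp
    linear_combination (-1) * hcs
  have hint : IntervalIntegrable (fun x => (π * Real.cos (π*x))^2) volume 0 1 :=
    ((continuous_const.mul (Real.continuous_cos.comp (continuous_const.mul continuous_id))).pow 2).intervalIntegrable 0 1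
  rw [intervalIntegral.integral_eq_sub_of_hasDerivAt hA hint]
  simp [Real.sin_pi]
  ring

set_option maxHeartbeats 1000000 in
private lemma wirtinger_aux (u : ℝ → ℝ) (hu : ContDiffOn ℝ 1 u (Set.Icc 0 1))
    (h0 : u 0 = 0) (h1 : u 1 = 0) :
    π^2 * ∫ x in (0:ℝ)..1, (u x)^2 ≤ ∫ x in (0:ℝ)..1, (derivWithin u (Set.Icc 0 1) x)^2 := by
  set g := derivWithin u (Set.Icc 0 1) with hg
  have hUD : UniqueDiffOn ℝ (Icc (0:ℝ) 1) := uniqueDiffOn_Icc zero_lt_one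
  have huc : ContinuousOn u (Icc 0 1) := hu.continuousOn
  have hgc : ContinuousOn g (Icc 0 1) := hu.continuousOn_derivWithin hUD le_rfl
  have hderiv : ∀ x ∈ Ioo (0:ℝ) 1, HasDerivAt u (g x) x := by
    intro x hx
    have h1 : HasDerivWithinAt u (g x) (Icc 0 1) x :=
      ((hu.differentiableOn one_ne_zero) x (Ioo_subset_Icc_self hx)).hasDerivWithinAt
    exact h1.hasDerivAt (Icc_mem_nhds hx.1 hx.2)
  obtain ⟨C, hC⟩ : ∃ C : ℝ, ∀ x ∈ Icc (0:ℝ) 1, ‖g x‖ ≤ C :=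
    isCompact_Icc.exists_bound_of_continuousOn hgc
  have hC0 : 0 ≤ C := le_trans (norm_nonneg _) (hC 0 (by norm_num))
  -- endpoint bounds on u
  have hub : ∀ x ∈ Icc (0:ℝ) 1, |u x| ≤ C * x ∧ |u x| ≤ C * (1 - x) := by
    intro x hx
    obtain ⟨hx0, hx1⟩ := hx
    constructor
    · have heq : ∫ t in (0:ℝ)..x, g t = u x - u 0 :=
        intervalIntegral.integral_eq_sub_of_hasDeriv_right_of_le hx0
          (huc.mono (Icc_subset_Icc le_rfl hx1))
          (fun t ht => (hderiv t ⟨ht.1, lt_of_lt_of_le ht.2 hx1⟩).hasDerivWithinAt)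
          ((hgc.mono (by rw [uIcc_of_le hx0]; exact Icc_subset_Icc le_rfl hx1)).intervalIntegrable)
      have hb := intervalIntegral.norm_integral_le_of_norm_le_const
        (C := C) (a := (0:ℝ)) (b := x) (f := g)
        (fun t ht => hC t ⟨le_of_lt (by { rw [uIoc_of_le hx0] at ht; exact ht.1 }),
          by { rw [uIoc_of_le hx0] at ht; exact ht.2.trans hx1 }⟩)
      rw [heq, h0, sub_zero] at hb
      simpa [abs_of_nonneg hx0] using hb
    · have heq : ∫ t in x..(1:ℝ), g t = u 1 - u x :=
        intervalIntegral.integral_eq_sub_of_hasDeriv_right_of_le hx1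
          (huc.mono (Icc_subset_Icc hx0 le_rfl))
          (fun t ht => (hderiv t ⟨lt_of_le_of_lt hx0 ht.1, ht.2⟩).hasDerivWithinAt)
          ((hgc.mono (by rw [uIcc_of_le hx1]; exact Icc_subset_Icc hx0 le_rfl)).intervalIntegrable)
      have hb := intervalIntegral.norm_integral_le_of_norm_le_const
        (C := C) (a := x) (b := (1:ℝ)) (f := g)
        (fun t ht => hC t ⟨hx0.trans (le_of_lt (by { rw [uIoc_of_le hx1] at ht; exact ht.1 })),
          by { rw [uIoc_of_le hx1] at ht; exact ht.2 }⟩)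
      rw [heq, h1, zero_sub, norm_neg] at hb
      calc |u x| = ‖u x‖ := rfl
        _ ≤ C * |1 - x| := hb
        _ = C * (1 - x) := by rw [abs_of_nonneg (by linarith)]
  -- integrability on [0,1]
  have hintu : IntervalIntegrable (fun x => (u x)^2) volume 0 1 :=
    ((huc.pow 2).mono (by rw [uIcc_of_le] <;> norm_num)).intervalIntegrable
  have hintg : IntervalIntegrable (fun x => (g x)^2) volume 0 1 :=
    ((hgc.pow 2).mono (by rw [uIcc_of_le] <;> norm_num)).intervalIntegrable
  -- key interval estimate
  have key : ∀ δ ∈ Ioo (0:ℝ) (1/2),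
      -(2*C^2*δ) ≤ ∫ x in δ..(1-δ), ((g x)^2 - π^2 * (u x)^2) := by
    intro δ hδ
    obtain ⟨hδ0, hδh⟩ := hδ
    set a := δ
    set b := 1 - δ with hbdef
    have hab : a < b := by simp only [hbdef]; linarith
    have hsubI : Icc a b ⊆ Ioo (0:ℝ) 1 := fun x hx =>
      ⟨lt_of_lt_of_le hδ0 hx.1, lt_of_le_of_lt hx.2 (by simp only [hbdef]; linarith)⟩
    have hsubC : Icc a b ⊆ Icc (0:ℝ) 1 := hsubI.trans Ioo_subset_Icc_self
    have hspos : ∀ x ∈ Ioo (0:ℝ) 1, 0 < Real.sin (π*x) := fun x hx =>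
      Real.sin_pos_of_pos_of_lt_pi (mul_pos pi_pos hx.1) (by nlinarith [pi_pos, hx.2])
    set F : ℝ → ℝ := fun x => π * (u x)^2 * (Real.cos (π*x) / Real.sin (π*x)) with hF
    set F' : ℝ → ℝ := fun x =>
      2*π*(u x)*(g x)*(Real.cos (π*x)/Real.sin (π*x)) - π^2*(u x)^2/(Real.sin (π*x))^2 with hF'
    have hFd : ∀ x ∈ Icc a b, HasDerivAt F (F' x) x := by
      intro x hx
      have hxI := hsubI hx
      have hs : Real.sin (π*x) ≠ 0 := (hspos x hxI).ne'
      have hlin : HasDerivAt (fun y : ℝ => π * y) π x := hlin' x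
      have hsin : HasDerivAt (fun y => Real.sin (π*y)) (Real.cos (π*x) * π) x :=
        (Real.hasDerivAt_sin (π*x)).comp x hlin
      have hcos : HasDerivAt (fun y => Real.cos (π*y)) (-Real.sin (π*x) * π) x :=
        (Real.hasDerivAt_cos (π*x)).comp x hlin
      have hu2 : HasDerivAt (fun y => π * (u y)^2) (π * (2 * u x * g x)) x := by
        have := ((hderiv x hxI).pow 2).const_mul π
        simpa [mul_comm, mul_assoc, mul_left_comm] using this
      have hq : HasDerivAt (fun y => Real.cos (π*y) / Real.sin (π*y))
          ((-Real.sin (π*x) * π * Real.sin (π*x) - Real.cos (π*x) * (Real.cos (π*x) * π))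
            / (Real.sin (π*x))^2) x :=
        hcos.div hsin hs
      have hD := hu2.mul hq
      refine hD.congr_deriv ?_
      have hcs : Real.cos (π*x)^2 + Real.sin (π*x)^2 = 1 := Real.cos_sq_add_sin_sq _
      simp only [hF']
      field_simp
      linear_combination (-(π*(u x)^2)) * hcs
    have hsne : ∀ x ∈ Icc a b, Real.sin (π*x) ≠ 0 := fun x hx => (hspos x (hsubI hx)).ne'
    have hcsin : ContinuousOn (fun x => Real.sin (π*x)) (Icc a b) :=
      (Real.continuous_sin.comp (continuous_const.mul continuous_id)).continuousOn
    have hccos : ContinuousOn (fun x => Real.cos (π*x)) (Icc a b) :=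
      (Real.continuous_cos.comp (continuous_const.mul continuous_id)).continuousOn
    have hcF' : ContinuousOn F' (Icc a b) := by
      apply ContinuousOn.sub
      · exact ((((continuousOn_const.mul (huc.mono hsubC)).mul (hgc.mono hsubC))).mul
          (hccos.div hcsin hsne))
      · exact (continuousOn_const.mul ((huc.mono hsubC).pow 2)).div (hcsin.pow 2)
          (fun x hx => pow_ne_zero 2 (hsne x hx))
    have hintF' : IntervalIntegrable F' volume a b :=
      (hcF'.mono (by rw [uIcc_of_le hab.le])).intervalIntegrable
    have hFTC : ∫ x in a..b, F' x = F b - F a :=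
      intervalIntegral.integral_eq_sub_of_hasDerivAt
        (fun x hx => hFd x (by rwa [uIcc_of_le hab.le] at hx)) hintF'
    have hinthab : IntervalIntegrable (fun x => (g x)^2 - π^2*(u x)^2) volume a b := by
      apply ContinuousOn.intervalIntegrable
      rw [uIcc_of_le hab.le]
      exact ((hgc.mono hsubC).pow 2).sub (continuousOn_const.mul ((huc.mono hsubC).pow 2))
    have hnn : 0 ≤ ∫ x in a..b, ((g x)^2 - π^2*(u x)^2 - F' x) := by
      apply intervalIntegral.integral_nonneg hab.le
      intro x hx
      have hs := hsne x hx
      have hcs : Real.cos (π*x)^2 + Real.sin (π*x)^2 = 1 := Real.cos_sq_add_sin_sq _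
      have hpt := ptwise' (g x) (u x) (Real.cos (π*x)) (Real.sin (π*x)) hs hcs
      simp only [hF']
      rw [hpt]
      positivity
    have hsplit : ∫ x in a..b, ((g x)^2 - π^2*(u x)^2 - F' x)
        = (∫ x in a..b, ((g x)^2 - π^2*(u x)^2)) - ∫ x in a..b, F' x :=
      intervalIntegral.integral_sub hinthab hintF'
    have hbd : -(2*C^2*δ) ≤ F b - F a := by
      have hπδ : 0 < π * δ := mul_pos pi_pos hδ0
      have hπδ2 : π * δ < π / 2 := by nlinarith [pi_pos]
      have hsδ : 0 < Real.sin (π*δ) := Real.sin_pos_of_pos_of_lt_pi hπδ (by nlinarith [pi_pos])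
      have hcδ : 0 < Real.cos (π*δ) := Real.cos_pos_of_mem_Ioo ⟨by nlinarith [pi_pos], hπδ2⟩
      have htan : π * δ < Real.tan (π*δ) := Real.lt_tan hπδ hπδ2
      rw [Real.tan_eq_sin_div_cos] at htan
      have hq1 : (π*δ) * (Real.cos (π*δ) / Real.sin (π*δ)) ≤ 1 := by
        rw [lt_div_iff₀ hcδ] at htan
        rw [mul_div_assoc', div_le_one hsδ]
        nlinarith
      have hq0 : 0 ≤ Real.cos (π*δ) / Real.sin (π*δ) := div_nonneg hcδ.le hsδ.le
      have hua : (u a)^2 ≤ C^2 * δ^2 := by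
        have := (hub a (hsubC (left_mem_Icc.mpr hab.le))).1
        nlinarith [abs_nonneg (u a), sq_abs (u a)]
      have hub' : (u b)^2 ≤ C^2 * δ^2 := by
        have h2 := (hub b (hsubC (right_mem_Icc.mpr hab.le))).2
        have hb' : (1 : ℝ) - b = δ := by simp [hbdef]
        rw [hb'] at h2
        nlinarith [abs_nonneg (u b), sq_abs (u b)]
      have hFb : F b = -(π * (u b)^2 * (Real.cos (π*δ) / Real.sin (π*δ))) := by
        have h1 : π * b = π - π * δ := by simp only [hbdef]; ring
        simp only [hF, h1, Real.cos_pi_sub, Real.sin_pi_sub]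
        ring
      have hFa : F a = π * (u a)^2 * (Real.cos (π*δ) / Real.sin (π*δ)) := rfl
      rw [hFb, hFa]
      set q := Real.cos (π*δ) / Real.sin (π*δ)
      nlinarith [mul_le_mul_of_nonneg_left (add_le_add hua hub') (mul_nonneg pi_pos.le hq0),
        mul_le_mul_of_nonneg_left hq1 (by positivity : (0:ℝ) ≤ 2*C^2*δ),
        sq_nonneg (u a), sq_nonneg (u b)]
    linarith [hFTC ▸ (hsplit ▸ hnn)]
  -- limiting argument
  have hconth : ContinuousOn (fun x => (g x)^2 - π^2*(u x)^2) (Icc 0 1) :=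
    (hgc.pow 2).sub (continuousOn_const.mul (huc.pow 2))
  have main : 0 ≤ ∫ x in (0:ℝ)..1, ((g x)^2 - π^2*(u x)^2) := by
    set h : ℝ → ℝ := fun x => (g x)^2 - π^2*(u x)^2 with hh
    have hinth : IntervalIntegrable h volume 0 1 :=
      (hconth.mono (by rw [uIcc_of_le] <;> norm_num)).intervalIntegrable
    set P : ℝ → ℝ := fun t => ∫ x in (0:ℝ)..t, h x with hP
    have hPc : ContinuousOn P (Icc 0 1) := by
      have := intervalIntegral.continuousOn_primitive_interval
        (f := h) (a := (0:ℝ)) (b := 1) (μ := volume)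
        (by rw [uIcc_of_le (by norm_num : (0:ℝ) ≤ 1)]; exact hconth.integrableOn_Icc)
      rwa [uIcc_of_le (by norm_num : (0:ℝ) ≤ 1)] at this
    have hmemIoo : Ioo (0:ℝ) (1/2) ∈ 𝓝[>] (0:ℝ) :=
      Ioo_mem_nhdsGT_of_mem ⟨le_refl 0, by norm_num⟩
    have heqI : ∀ δ ∈ Ioo (0:ℝ) (1/2), ∫ x in δ..(1-δ), h x = P (1-δ) - P δ := by
      intro δ hδ
      have h1 : IntervalIntegrable h volume 0 (1-δ) := hinth.mono_set
        (by rw [uIcc_of_le (by linarith [hδ.2] : (0:ℝ) ≤ 1 - δ), uIcc_of_le (by norm_num : (0:ℝ) ≤ 1)]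
            exact Icc_subset_Icc le_rfl (by linarith [hδ.1]))
      have h2 : IntervalIntegrable h volume 0 δ := hinth.mono_set
        (by rw [uIcc_of_le hδ.1.le, uIcc_of_le (by norm_num : (0:ℝ) ≤ 1)]
            exact Icc_subset_Icc le_rfl (by linarith [hδ.2]))
      exact (intervalIntegral.integral_interval_sub_left h1 h2).symm
    have t1 : Tendsto (fun δ : ℝ => P (1-δ)) (𝓝[>] 0) (𝓝 (P 1)) := by
      apply (hPc 1 (by norm_num)).tendsto.comp
      rw [tendsto_nhdsWithin_iff]
      constructor
      · have : Tendsto (fun δ : ℝ => 1 - δ) (𝓝 (0:ℝ)) (𝓝 (1:ℝ)) := by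
          simpa using (tendsto_const_nhds.sub tendsto_id : Tendsto (fun δ:ℝ => (1:ℝ) - δ) (𝓝 0) (𝓝 (1-0)))
        exact this.mono_left nhdsWithin_le_nhds
      · filter_upwards [hmemIoo] with δ hδ
        exact ⟨by linarith [hδ.2], by linarith [hδ.1]⟩
    have t2 : Tendsto (fun δ : ℝ => P δ) (𝓝[>] 0) (𝓝 (P 0)) := by
      apply (hPc 0 (by norm_num)).tendsto.comp
      rw [tendsto_nhdsWithin_iff]
      refine ⟨tendsto_id.mono_left nhdsWithin_le_nhds, ?_⟩
      filter_upwards [hmemIoo] with δ hδ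
      exact ⟨hδ.1.le, by linarith [hδ.2]⟩
    have hP0 : P 0 = 0 := intervalIntegral.integral_same
    have tI : Tendsto (fun δ : ℝ => P (1-δ) - P δ) (𝓝[>] 0) (𝓝 (P 1)) := by
      have := t1.sub t2
      rwa [hP0, sub_zero] at this
    have tc : Tendsto (fun δ : ℝ => -(2*C^2*δ)) (𝓝[>] 0) (𝓝 0) := by
      have h3 : Tendsto (fun δ : ℝ => -(2*C^2*δ)) (𝓝 (0:ℝ)) (𝓝 (-(2*C^2*0))) :=
        ((continuous_const.mul continuous_id).neg).tendsto 0
      simpa using h3.mono_left nhdsWithin_le_nhds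
    refine le_of_tendsto_of_tendsto tc tI ?_
    filter_upwards [hmemIoo] with δ hδ
    calc -(2*C^2*δ) ≤ ∫ x in δ..(1-δ), h x := key δ hδ
      _ = P (1-δ) - P δ := heqI δ hδ
  have hsplit : (∫ x in (0:ℝ)..1, ((g x)^2 - π^2 * (u x)^2))
      = (∫ x in (0:ℝ)..1, (g x)^2) - π^2 * ∫ x in (0:ℝ)..1, (u x)^2 := by
    rw [intervalIntegral.integral_sub hintg (hintu.const_mul _),
      intervalIntegral.integral_const_mul]
  linarith [hsplit ▸ main]

end WirtingerAux

set_option maxHeartbeats 1000000 in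
theorem poincare_wirtinger_and_min_rayleigh :
    (∀ u : ℝ → ℝ, ContDiffOn ℝ 1 u (Set.Icc 0 1) → u 0 = 0 → u 1 = 0 →
      (¬ ∀ x ∈ Set.Icc (0:ℝ) 1, u x = 0) →
      π^2 * ∫ x in (0:ℝ)..1, (u x)^2 ≤ ∫ x in (0:ℝ)..1, (derivWithin u (Set.Icc 0 1) x)^2) ∧
    IsLeast {r : ℝ | ∃ u : ℝ → ℝ, ContDiffOn ℝ 1 u (Set.Icc 0 1) ∧ u 0 = 0 ∧ u 1 = 0 ∧
        (¬ ∀ x ∈ Set.Icc (0:ℝ) 1, u x = 0) ∧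
        r = (∫ x in (0:ℝ)..1, (derivWithin u (Set.Icc 0 1) x)^2) /
              (∫ x in (0:ℝ)..1, (u x)^2)}
      (π^2) := by
  constructor
  · intro u hu h0 h1 _
    exact wirtinger_aux u hu h0 h1
  constructor
  · -- membership : u = sin (π x)
    refine ⟨fun x => Real.sin (π * x), ?_, by simp, by simp, ?_, ?_⟩
    · exact (Real.contDiff_sin.comp (contDiff_const.mul contDiff_id)).contDiffOn
    · intro hall
      have h2 := hall (1/2) (by norm_num)
      simp only [show π * (1/2 : ℝ) = π/2 by ring, Real.sin_pi_div_two] at h2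
      norm_num at h2
    · have hdw : ∀ x ∈ Set.Icc (0:ℝ) 1,
          derivWithin (fun y => Real.sin (π * y)) (Set.Icc 0 1) x = π * Real.cos (π * x) :=
        fun x hx => ((hsinD x).hasDerivWithinAt).derivWithin
          ((uniqueDiffOn_Icc zero_lt_one) x hx)
      have hcongr : (∫ x in (0:ℝ)..1, (derivWithin (fun y => Real.sin (π * y)) (Set.Icc 0 1) x)^2)
          = ∫ x in (0:ℝ)..1, (π * Real.cos (π * x))^2 := by
        apply intervalIntegral.integral_congr
        intro x hx
        rw [Set.uIcc_of_le (by norm_num : (0:ℝ) ≤ 1)] at hx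
        simp [hdw x hx]
      rw [hcongr, int_cos_sq', int_sin_sq']
      ring
  · -- lower bound
    rintro r ⟨u, hu, h0, h1, hne, hr⟩
    have main := wirtinger_aux u hu h0 h1
    push_neg at hne
    obtain ⟨x₀, hx₀, hux₀⟩ := hne
    have hpos : 0 < ∫ x in (0:ℝ)..1, (u x)^2 := by
      apply intervalIntegral.integral_pos zero_lt_one (hu.continuousOn.pow 2)
        (fun x _ => sq_nonneg _)
      exact ⟨x₀, hx₀, lt_of_le_of_ne (sq_nonneg _) (Ne.symm (pow_ne_zero 2 hux₀))⟩
    rw [hr, le_div_iff₀ hpos]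
    linarith [main]
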